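/- Let P and Q be autoregressive distributions on V^T with conditionals p_t, q_t, let M = ½(P+Q), and define α_t(h) = P_{<t}(h)/(P_{<t}(h)+Q_{<t}(h)) for prefixes h with M_{<t}(h) > 0. Then JS(P ‖ Q) = Σ_{t=1}^T E_{H ∼ M_{<t}} [ D_JS^{α_t(H)}( p_t(·|H) ‖ q_t(·|H) ) ], where D_JS^α(μ‖ν) = α·D_KL(μ ‖ αμ+(1−α)ν) + (1−α)·D_KL(ν ‖ αμ+(1−α)ν) is the skew Jensen–Shannon divergence. -/
import Mathlib


open Finset

/-- KL divergence between two (finitely supported) mass functions, with the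
convention `0 log 0 = 0`. -/
noncomputable def KL {X : Type*} [Fintype X] (μ ν : X → ℝ) : ℝ :=
  ∑ x, if μ x = 0 then 0 else μ x * Real.log (μ x / ν x)

/-- `μ` is a probability mass function on the finite type `X`. -/
def IsPMF {X : Type*} [Fintype X] (μ : X → ℝ) : Prop :=
  (∀ x, 0 ≤ μ x) ∧ ∑ x, μ x = 1

/-- Jensen–Shannon divergence. -/
noncomputable def JS {X : Type*} [Fintype X] (μ ν : X → ℝ) : ℝ :=
  (1/2) * KL μ (fun x => (μ x + ν x) / 2) + (1/2) * KL ν (fun x => (μ x + ν x) / 2)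

/-- Skew Jensen–Shannon divergence with skew parameter `α`. -/
noncomputable def skewJS {X : Type*} [Fintype X] (α : ℝ) (μ ν : X → ℝ) : ℝ :=
  α * KL μ (fun x => α * μ x + (1 - α) * ν x)
    + (1 - α) * KL ν (fun x => α * μ x + (1 - α) * ν x)

/-- The sequence-level distribution on `Fin T → V` induced by an autoregressive
family of conditionals `π t : (Fin t → V) → V → ℝ`. -/
noncomputable def seqProb {V : Type*} (π : (t : ℕ) → (Fin t → V) → V → ℝ) (T : ℕ)
    (x : Fin T → V) : ℝ :=
  ∏ t : Fin T, π t (fun i => x (Fin.castLE t.isLt.le i)) (x t)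

/-- The marginal of the prefix `X_{<t}` under a distribution `P` on `Fin T → V`. -/
noncomputable def prefixMarginal {V : Type*} [Fintype V] [DecidableEq V] {T : ℕ}
    (P : (Fin T → V) → ℝ) {t : ℕ} (ht : t ≤ T) (h : Fin t → V) : ℝ :=
  ∑ x ∈ Finset.univ.filter
      (fun x : Fin T → V => ∀ i : Fin t, x (Fin.castLE ht i) = h i), P x

/-! ### Auxiliary lemmas -/

lemma KL_comp_equiv {X Y : Type*} [Fintype X] [Fintype Y] (e : X ≃ Y) (μ ν : Y → ℝ) :
    KL (μ ∘ e) (ν ∘ e) = KL μ ν := by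
  unfold KL
  exact Fintype.sum_equiv e _ _ (fun x => rfl)

lemma JS_comp_equiv {X Y : Type*} [Fintype X] [Fintype Y] (e : X ≃ Y) (μ ν : Y → ℝ) :
    JS (μ ∘ e) (ν ∘ e) = JS μ ν := by
  unfold JS
  rw [show (fun x => ((μ ∘ e) x + (ν ∘ e) x) / 2) = (fun y => (μ y + ν y) / 2) ∘ e from rfl,
    KL_comp_equiv e μ _, KL_comp_equiv e ν _]

lemma KL_step {H V : Type*} [Fintype H] [Fintype V] (P Q : H → ℝ) (p q : H → V → ℝ)
    (hP : ∀ h, 0 ≤ P h) (hQ : ∀ h, 0 ≤ Q h)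
    (hp : ∀ h, IsPMF (p h)) (hq : ∀ h, IsPMF (q h)) :
    KL (fun hv : H × V => P hv.1 * p hv.1 hv.2)
      (fun hv : H × V => (P hv.1 * p hv.1 hv.2 + Q hv.1 * q hv.1 hv.2) / 2)
    = KL P (fun h => (P h + Q h) / 2)
      + ∑ h, P h * KL (p h)
          (fun v => (P h / (P h + Q h)) * p h v + (1 - P h / (P h + Q h)) * q h v) := by
  unfold KL
  rw [Fintype.sum_prod_type, ← Finset.sum_add_distrib]
  refine Finset.sum_congr rfl fun h _ => ?_
  by_cases hPh : P h = 0
  · simp [hPh]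
  · have hPpos : 0 < P h := lt_of_le_of_ne (hP h) (Ne.symm hPh)
    have hPQ : 0 < P h + Q h := by linarith [hQ h]
    have hM : (0:ℝ) < (P h + Q h) / 2 := by linarith
    have hα : 0 < P h / (P h + Q h) := div_pos hPpos hPQ
    have h1α : 0 ≤ 1 - P h / (P h + Q h) := by
      rw [sub_nonneg]
      exact div_le_one_of_le₀ (by linarith [hQ h]) hPQ.le
    rw [if_neg hPh]
    have key : ∀ v, (if P h * p h v = 0 then 0 else
          P h * p h v * Real.log (P h * p h v / ((P h * p h v + Q h * q h v) / 2)))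
        = P h * p h v * Real.log (P h / ((P h + Q h) / 2))
          + P h * (if p h v = 0 then 0 else p h v *
              Real.log (p h v / ((P h / (P h + Q h)) * p h v
                + (1 - P h / (P h + Q h)) * q h v))) := by
      intro v
      by_cases hpv : p h v = 0
      · simp [hpv]
      · have hppos : 0 < p h v := lt_of_le_of_ne ((hp h).1 v) (Ne.symm hpv)
        have hmix : 0 < (P h / (P h + Q h)) * p h v + (1 - P h / (P h + Q h)) * q h v :=
          add_pos_of_pos_of_nonneg (mul_pos hα hppos) (mul_nonneg h1α ((hq h).1 v))
        rw [if_neg (mul_ne_zero hPh hpv), if_neg hpv]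
        have hden : (P h * p h v + Q h * q h v) / 2
            = ((P h + Q h) / 2) * ((P h / (P h + Q h)) * p h v
                + (1 - P h / (P h + Q h)) * q h v) := by
          field_simp
          ring
        rw [hden, mul_div_mul_comm,
          Real.log_mul (div_ne_zero hPh hM.ne') (div_ne_zero hpv hmix.ne')]
        ring
    simp_rw [key]
    rw [Finset.sum_add_distrib, ← Finset.mul_sum]
    congr 1
    have : ∀ v, P h * p h v * Real.log (P h / ((P h + Q h) / 2))
        = (P h * Real.log (P h / ((P h + Q h) / 2))) * p h v := fun v => by ring
    simp_rw [this]
    rw [← Finset.mul_sum, (hp h).2, mul_one]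

lemma JS_step {H V : Type*} [Fintype H] [Fintype V] (P Q : H → ℝ) (p q : H → V → ℝ)
    (hP : ∀ h, 0 ≤ P h) (hQ : ∀ h, 0 ≤ Q h)
    (hp : ∀ h, IsPMF (p h)) (hq : ∀ h, IsPMF (q h)) :
    JS (fun hv : H × V => P hv.1 * p hv.1 hv.2) (fun hv : H × V => Q hv.1 * q hv.1 hv.2)
    = JS P Q + ∑ h, ((P h + Q h) / 2) * skewJS (P h / (P h + Q h)) (p h) (q h) := by
  have e1 := KL_step P Q p q hP hQ hp hq
  have e2 := KL_step Q P q p hQ hP hq hp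
  rw [show (fun hv : H × V => (Q hv.1 * q hv.1 hv.2 + P hv.1 * p hv.1 hv.2) / 2)
      = (fun hv : H × V => (P hv.1 * p hv.1 hv.2 + Q hv.1 * q hv.1 hv.2) / 2)
      from funext fun hv => by ring,
    show (fun h => (Q h + P h) / 2) = (fun h => (P h + Q h) / 2)
      from funext fun h => by ring] at e2
  unfold JS
  rw [show (fun x : H × V => ((fun hv : H × V => P hv.1 * p hv.1 hv.2) x
        + (fun hv : H × V => Q hv.1 * q hv.1 hv.2) x) / 2)
      = (fun hv : H × V => (P hv.1 * p hv.1 hv.2 + Q hv.1 * q hv.1 hv.2) / 2) from rfl]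
  rw [e1, e2]
  rw [show (1:ℝ)/2 * (KL P (fun h => (P h + Q h)/2) + ∑ h, P h * KL (p h)
        (fun v => (P h / (P h + Q h)) * p h v + (1 - P h / (P h + Q h)) * q h v))
      + (1:ℝ)/2 * (KL Q (fun h => (P h + Q h)/2) + ∑ h, Q h * KL (q h)
        (fun v => (Q h / (Q h + P h)) * q h v + (1 - Q h / (Q h + P h)) * p h v))
      = ((1:ℝ)/2 * KL P (fun h => (P h + Q h)/2) + (1:ℝ)/2 * KL Q (fun h => (P h + Q h)/2))
      + (∑ h, ((1:ℝ)/2 * (P h * KL (p h)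
          (fun v => (P h / (P h + Q h)) * p h v + (1 - P h / (P h + Q h)) * q h v))
        + (1:ℝ)/2 * (Q h * KL (q h)
          (fun v => (Q h / (Q h + P h)) * q h v + (1 - Q h / (Q h + P h)) * p h v))))
      from by rw [Finset.sum_add_distrib, ← Finset.mul_sum, ← Finset.mul_sum]; ring]
  congr 1
  refine Finset.sum_congr rfl fun h _ => ?_
  by_cases hPQ : P h + Q h = 0
  · have hP0 : P h = 0 := le_antisymm (by linarith [hQ h]) (hP h)
    have hQ0 : Q h = 0 := le_antisymm (by linarith [hP h]) (hQ h)
    simp [hP0, hQ0]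
  · have hmixeq : (fun v => (Q h / (Q h + P h)) * q h v + (1 - Q h / (Q h + P h)) * p h v)
        = (fun v => (P h / (P h + Q h)) * p h v + (1 - P h / (P h + Q h)) * q h v) := by
      funext v
      have hQP : Q h + P h ≠ 0 := by rw [add_comm]; exact hPQ
      field_simp
      ring
    rw [hmixeq]
    unfold skewJS
    field_simp
    ring

/-- Equivalence between `(Fin T → V) × V` and `Fin (T+1) → V` by `snoc`. -/
def snocE (V : Type*) (T : ℕ) : ((Fin T → V) × V) ≃ (Fin (T + 1) → V) where
  toFun yv := Fin.snoc yv.1 yv.2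
  invFun x := (Fin.init x, x (Fin.last T))
  left_inv := fun yv => by simp
  right_inv := fun x => Fin.snoc_init_self x

lemma seqProb_succ {V : Type*} (π : (t : ℕ) → (Fin t → V) → V → ℝ) (T : ℕ)
    (x : Fin (T + 1) → V) :
    seqProb π (T + 1) x = seqProb π T (Fin.init x) * π T (Fin.init x) (x (Fin.last T)) := by
  unfold seqProb
  rw [Fin.prod_univ_castSucc]
  rfl

lemma prefixMarginal_succ {V : Type*} [Fintype V] [DecidableEq V] {T : ℕ}
    (A : (Fin T → V) → ℝ) (r : (Fin T → V) → V → ℝ)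
    (hr : ∀ y, ∑ v, r y v = 1) {t : ℕ} (ht : t ≤ T) (ht' : t ≤ T + 1) (h : Fin t → V) :
    prefixMarginal (fun x : Fin (T + 1) → V =>
        A (Fin.init x) * r (Fin.init x) (x (Fin.last T))) ht' h
      = prefixMarginal A ht h := by
  unfold prefixMarginal
  rw [Finset.sum_filter, Finset.sum_filter]
  conv_lhs => rw [← Equiv.sum_comp (snocE V T)]
  rw [Fintype.sum_prod_type]
  refine Finset.sum_congr rfl fun y _ => ?_
  have hsnoc : ∀ (v : V) (i : Fin t),
      (Fin.snoc y v : Fin (T + 1) → V) (Fin.castLE ht' i) = y (Fin.castLE ht i) := by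
    intro v i
    have : (Fin.castLE ht' i) = Fin.castSucc (Fin.castLE ht i) := rfl
    rw [this, Fin.snoc_castSucc]
  simp only [snocE, Equiv.coe_fn_mk, Fin.init_snoc, Fin.snoc_last]
  simp_rw [hsnoc]
  by_cases hc : ∀ i : Fin t, y (Fin.castLE ht i) = h i
  · simp only [if_pos hc, ← Finset.mul_sum, hr y, mul_one]
  · simp only [if_neg hc, Finset.sum_const_zero]

lemma prefixMarginal_refl {V : Type*} [Fintype V] [DecidableEq V] {T : ℕ}
    (A : (Fin T → V) → ℝ) (ht : T ≤ T) (h : Fin T → V) :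
    prefixMarginal A ht h = A h := by
  unfold prefixMarginal
  have : ∀ x : Fin T → V, (∀ i : Fin T, x (Fin.castLE ht i) = h i) ↔ x = h := by
    intro x
    constructor
    · intro hx; funext i; exact hx i
    · intro hx i; rw [hx]; rfl
  rw [Finset.sum_filter]
  simp_rw [this]
  simp

lemma prefixMarginal_half {V : Type*} [Fintype V] [DecidableEq V] {T : ℕ}
    (A B : (Fin T → V) → ℝ) {t : ℕ} (ht : t ≤ T) (h : Fin t → V) :
    prefixMarginal (fun x => (A x + B x) / 2) ht h
      = (prefixMarginal A ht h + prefixMarginal B ht h) / 2 := by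
  unfold prefixMarginal
  rw [← Finset.sum_add_distrib, ← Finset.sum_div]

lemma seqProb_nonneg {V : Type*} [Fintype V] (π : (t : ℕ) → (Fin t → V) → V → ℝ)
    (hπ : ∀ (t : ℕ) (h : Fin t → V), IsPMF (π t h)) (T : ℕ) (x : Fin T → V) :
    0 ≤ seqProb π T x :=
  Finset.prod_nonneg fun t _ => (hπ _ _).1 _

/-- Chain rule for the Jensen–Shannon divergence of autoregressive distributions,
via history-dependent skew Jensen–Shannon divergences. -/
theorem js_chain_rule {V : Type*} [Fintype V] [DecidableEq V] (T : ℕ)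
    (p q : (t : ℕ) → (Fin t → V) → V → ℝ)
    (hp : ∀ (t : ℕ) (h : Fin t → V), IsPMF (p t h))
    (hq : ∀ (t : ℕ) (h : Fin t → V), IsPMF (q t h)) :
    JS (seqProb p T) (seqProb q T)
      = ∑ t : Fin T, ∑ h : Fin (t : ℕ) → V,
          prefixMarginal (fun x => (seqProb p T x + seqProb q T x) / 2) t.isLt.le h *
            skewJS
              (prefixMarginal (seqProb p T) t.isLt.le h /
                (prefixMarginal (seqProb p T) t.isLt.le h
                  + prefixMarginal (seqProb q T) t.isLt.le h))
              (p t h) (q t h) := by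
  induction T with
  | zero =>
      simp [JS, KL, seqProb]
  | succ T IH =>
      have hAnn : ∀ y, 0 ≤ seqProb p T y := seqProb_nonneg p hp T
      have hBnn : ∀ y, 0 ≤ seqProb q T y := seqProb_nonneg q hq T
      have hPcomp : (seqProb p (T + 1)) ∘ (snocE V T)
          = fun yv : (Fin T → V) × V => seqProb p T yv.1 * p T yv.1 yv.2 := by
        funext yv
        show seqProb p (T + 1) (Fin.snoc yv.1 yv.2) = _
        rw [seqProb_succ]
        simp
      have hQcomp : (seqProb q (T + 1)) ∘ (snocE V T)
          = fun yv : (Fin T → V) × V => seqProb q T yv.1 * q T yv.1 yv.2 := by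
        funext yv
        show seqProb q (T + 1) (Fin.snoc yv.1 yv.2) = _
        rw [seqProb_succ]
        simp
      have hLHS : JS (seqProb p (T + 1)) (seqProb q (T + 1))
          = JS (seqProb p T) (seqProb q T)
            + ∑ y : Fin T → V, ((seqProb p T y + seqProb q T y) / 2) *
                skewJS (seqProb p T y / (seqProb p T y + seqProb q T y)) (p T y) (q T y) := by
        rw [← JS_comp_equiv (snocE V T) (seqProb p (T + 1)) (seqProb q (T + 1)),
          hPcomp, hQcomp]
        exact JS_step _ _ _ _ hAnn hBnn (hp T) (hq T)
      have margP : ∀ (t : ℕ) (ht' : t ≤ T + 1) (ht : t ≤ T) (h : Fin t → V),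
          prefixMarginal (seqProb p (T + 1)) ht' h = prefixMarginal (seqProb p T) ht h := by
        intro t ht' ht h
        rw [show seqProb p (T + 1) = (fun x : Fin (T + 1) → V =>
            seqProb p T (Fin.init x) * p T (Fin.init x) (x (Fin.last T)))
          from funext (seqProb_succ p T)]
        exact prefixMarginal_succ _ _ (fun y => (hp T y).2) ht ht' h
      have margQ : ∀ (t : ℕ) (ht' : t ≤ T + 1) (ht : t ≤ T) (h : Fin t → V),
          prefixMarginal (seqProb q (T + 1)) ht' h = prefixMarginal (seqProb q T) ht h := by
        intro t ht' ht h
        rw [show seqProb q (T + 1) = (fun x : Fin (T + 1) → V =>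
            seqProb q T (Fin.init x) * q T (Fin.init x) (x (Fin.last T)))
          from funext (seqProb_succ q T)]
        exact prefixMarginal_succ _ _ (fun y => (hq T y).2) ht ht' h
      have margM : ∀ (t : ℕ) (ht' : t ≤ T + 1) (ht : t ≤ T) (h : Fin t → V),
          prefixMarginal (fun x => (seqProb p (T + 1) x + seqProb q (T + 1) x) / 2) ht' h
          = (prefixMarginal (seqProb p T) ht h + prefixMarginal (seqProb q T) ht h) / 2 := by
        intro t ht' ht h
        rw [prefixMarginal_half, margP t ht' ht, margQ t ht' ht]
      rw [hLHS, IH, Fin.sum_univ_castSucc]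
      congr 1
      · refine Finset.sum_congr rfl fun t _ => ?_
        refine Finset.sum_congr rfl fun h _ => ?_
        rw [margM _ _ t.isLt.le, margP _ _ t.isLt.le, margQ _ _ t.isLt.le,
          prefixMarginal_half]
        rfl
      · refine Finset.sum_congr rfl fun h _ => ?_
        rw [margM _ _ (le_refl T), margP _ _ (le_refl T), margQ _ _ (le_refl T),
          prefixMarginal_refl, prefixMarginal_refl]
        rfl
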